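/- Let x, y, c be points in the Euclidean plane and r > 0 with dist(x,c) > r and dist(y,c) > r. If infDist(c, [x,y]) < r (the point of the segment closest to c lies strictly inside the disk), then the segment [x,y] intersects the circle C(c,r) in exactly two points. -/

import Mathlib

private theorem eq_of_sq_eq_sq_aux {d r : ℝ} (hd : 0 ≤ d) (hr : 0 < r)
    (h : d ^ 2 = r ^ 2) : d = r := by
  have h2 : (d - r) * (d + r) = 0 := by linear_combination h
  rcases mul_eq_zero.mp h2 with h3 | h3 <;> linarith

private theorem quad_two_roots (A B C t0 : ℝ) (hA : 0 < A) (hC : 0 < C)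
    (h1 : 0 < A + B + C) (ht00 : 0 ≤ t0) (ht01 : t0 ≤ 1)
    (hq0 : A * t0 ^ 2 + B * t0 + C < 0) :
    ∃ t1 t2 : ℝ, t1 < t2 ∧ 0 ≤ t1 ∧ t2 ≤ 1 ∧
      ∀ t : ℝ, A * t ^ 2 + B * t + C = 0 ↔ t = t1 ∨ t = t2 := by
  have hD : 0 < B ^ 2 - 4 * A * C := by nlinarith [sq_nonneg (2 * A * t0 + B)]
  set s := Real.sqrt (B ^ 2 - 4 * A * C) with hsdef
  have hs2 : s ^ 2 = B ^ 2 - 4 * A * C := Real.sq_sqrt hD.le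
  have hs0 : 0 < s := Real.sqrt_pos.mpr hD
  set t1 := (-B - s) / (2 * A) with ht1def
  set t2 := (-B + s) / (2 * A) with ht2def
  have hA2 : (2 * A : ℝ) ≠ 0 := by positivity
  have he1 : 2 * A * t1 = -B - s := by rw [ht1def]; field_simp
  have he2 : 2 * A * t2 = -B + s := by rw [ht2def]; field_simp
  have hfac : ∀ t : ℝ, A * t ^ 2 + B * t + C = A * (t - t1) * (t - t2) := by
    intro t
    have h4 : 4 * A * (A * t ^ 2 + B * t + C) = 4 * A * (A * (t - t1) * (t - t2)) := by
      linear_combination (2 * A * t - 2 * A * t2) * he1 + (2 * A * t + B + s) * he2 + hs2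
    have h4A : (4 * A : ℝ) ≠ 0 := by positivity
    exact mul_left_cancel₀ h4A h4
  have ht12 : t1 < t2 := by
    have h21 : 2 * A * (t2 - t1) = 2 * s := by linear_combination he2 - he1
    nlinarith
  have hft0 : A * (t0 - t1) * (t0 - t2) < 0 := by rw [← hfac]; exact hq0
  have hf0 : A * (0 - t1) * (0 - t2) = C := by linear_combination (hfac 0).symm
  have hf1 : 0 < A * (1 - t1) * (1 - t2) := by
    rw [← hfac]; nlinarith
  have ht1t0 : t1 < t0 := by
    by_contra hcon
    push_neg at hcon
    have h' : (t0 - t1) * (t0 - t2) ≥ 0 := by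
      have : (t1 - t0) * (t2 - t0) ≥ 0 := mul_nonneg (by linarith) (by linarith)
      nlinarith
    nlinarith
  have ht0t2 : t0 < t2 := by
    by_contra hcon
    push_neg at hcon
    have h' : (t0 - t1) * (t0 - t2) ≥ 0 :=
      mul_nonneg (by linarith) (by linarith)
    nlinarith
  have ht1pos : 0 < t1 := by
    by_contra hcon
    push_neg at hcon
    have h' : (-t1) * t2 ≥ 0 := mul_nonneg (by linarith) (by linarith)
    nlinarith [mul_nonneg hA.le h']
  have ht2le : t2 ≤ 1 := by
    by_contra hcon
    push_neg at hcon
    have h' : 0 < (1 - t1) * (t2 - 1) := mul_pos (by linarith) (by linarith)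
    nlinarith [mul_pos hA h']
  refine ⟨t1, t2, ht12, ht1pos.le, ht2le, ?_⟩
  intro t
  rw [hfac t]
  constructor
  · intro h
    rcases mul_eq_zero.mp h with h' | h'
    · rcases mul_eq_zero.mp h' with h'' | h''
      · exact absurd h'' (ne_of_gt hA)
      · exact Or.inl (sub_eq_zero.mp h'')
    · exact Or.inr (sub_eq_zero.mp h')
  · rintro (rfl | rfl) <;> ring

/-- both endpoints strictly outside, closest point of segment strictly inside:
exactly two intersection points. -/
theorem segment_circle_inter_type_two
    (x y c : EuclideanSpace ℝ (Fin 2)) (r : ℝ) (hr : 0 < r)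
    (hx : r < dist x c) (hy : r < dist y c)
    (hinf : Metric.infDist c (segment ℝ x y) < r) :
    ∃ p q : EuclideanSpace ℝ (Fin 2), p ≠ q ∧
      segment ℝ x y ∩ Metric.sphere c r = {p, q} := by
  have key : ∀ t : ℝ, dist (x + t • (y - x)) c ^ 2 =
      ‖y - x‖ ^ 2 * t ^ 2 + (2 * (inner ℝ (x - c) (y - x) : ℝ)) * t
        + (‖x - c‖ ^ 2 - r ^ 2) + r ^ 2 := by
    intro t
    have h : x + t • (y - x) - c = (x - c) + t • (y - x) := by abel
    rw [dist_eq_norm, h, norm_add_sq_real, real_inner_smul_right, norm_smul, mul_pow,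
      Real.norm_eq_abs, sq_abs]
    ring
  obtain ⟨z0, hz0S, hz0⟩ :=
    (Metric.infDist_lt_iff ⟨x, left_mem_segment ℝ x y⟩).mp hinf
  rw [segment_eq_image'] at hz0S
  obtain ⟨t0, ht0, rfl⟩ := hz0S
  rw [dist_comm] at hz0
  have hz0' : dist (x + t0 • (y - x)) c < r := hz0
  have hvne : y - x ≠ 0 := by
    intro h
    rw [h, smul_zero, add_zero] at hz0'
    linarith
  have hA : 0 < ‖y - x‖ ^ 2 := pow_pos (norm_pos_iff.mpr hvne) 2
  have hC : 0 < ‖x - c‖ ^ 2 - r ^ 2 := by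
    rw [← dist_eq_norm]
    nlinarith
  have h1 : 0 < ‖y - x‖ ^ 2 + 2 * (inner ℝ (x - c) (y - x) : ℝ) + (‖x - c‖ ^ 2 - r ^ 2) := by
    have e : x + (1 : ℝ) • (y - x) = y := by simp
    have hk := key 1
    rw [e] at hk
    nlinarith
  have hq0 : ‖y - x‖ ^ 2 * t0 ^ 2 + 2 * (inner ℝ (x - c) (y - x) : ℝ) * t0
      + (‖x - c‖ ^ 2 - r ^ 2) < 0 := by
    have hk := key t0
    nlinarith [dist_nonneg (x := x + t0 • (y - x)) (y := c)]
  obtain ⟨t1, t2, ht12, ht1pos, ht2le, hiff⟩ :=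
    quad_two_roots (‖y - x‖ ^ 2) (2 * (inner ℝ (x - c) (y - x) : ℝ))
      (‖x - c‖ ^ 2 - r ^ 2) t0 hA hC h1 ht0.1 ht0.2 hq0
  refine ⟨x + t1 • (y - x), x + t2 • (y - x), ?_, ?_⟩
  · intro h
    have h' : t1 • (y - x) = t2 • (y - x) := add_left_cancel h
    have h'' : (t1 - t2) • (y - x) = 0 := by rw [sub_smul, h', sub_self]
    rcases smul_eq_zero.mp h'' with h3 | h3
    · have : t1 = t2 := by linarith [sub_eq_zero.mp h3]
      exact absurd this (ne_of_lt ht12)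
    · exact hvne h3
  · ext z
    simp only [Set.mem_inter_iff, Metric.mem_sphere, Set.mem_insert_iff,
      Set.mem_singleton_iff]
    constructor
    · rintro ⟨hzS, hzC⟩
      rw [segment_eq_image'] at hzS
      obtain ⟨t, ht, rfl⟩ := hzS
      have hd : dist (x + t • (y - x)) c = r := hzC
      have hq : ‖y - x‖ ^ 2 * t ^ 2 + 2 * (inner ℝ (x - c) (y - x) : ℝ) * t
          + (‖x - c‖ ^ 2 - r ^ 2) = 0 := by
        have hk := key t
        rw [hd] at hk
        nlinarith
      rcases (hiff t).mp hq with rfl | rfl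
      · left; rfl
      · right; rfl
    · have hmem : ∀ u : ℝ, 0 ≤ u → u ≤ 1 →
          (‖y - x‖ ^ 2 * u ^ 2 + 2 * (inner ℝ (x - c) (y - x) : ℝ) * u
            + (‖x - c‖ ^ 2 - r ^ 2) = 0) →
          x + u • (y - x) ∈ segment ℝ x y ∧ dist (x + u • (y - x)) c = r := by
        intro u hu0 hu1 hq
        constructor
        · rw [segment_eq_image']
          exact ⟨u, ⟨hu0, hu1⟩, rfl⟩
        · have hd2 : dist (x + u • (y - x)) c ^ 2 = r ^ 2 := by
            rw [key u]; linarith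
          exact eq_of_sq_eq_sq_aux dist_nonneg hr hd2
      rintro (rfl | rfl)
      · exact hmem t1 ht1pos (by linarith) ((hiff t1).mpr (Or.inl rfl))
      · exact hmem t2 (by linarith) ht2le ((hiff t2).mpr (Or.inr rfl))
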